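/- (Angle Superposition Theorem, trace form.) Let X_sC ∈ ℝ^{N×p}, X_rC ∈ ℝ^{N×q}, Y_C ∈ ℝ^{N×m}, and X_C = (X_sC, X_rC). Suppose: (i) U ∈ ℝ^{N×z} satisfies UᵀU = I_z, and X_sC = U·F_s, X_rC = U·F_r, Y_C = U·F_Y for F_s ∈ ℝ^{z×p}, F_r ∈ ℝ^{z×q}, F_Y ∈ ℝ^{z×m}; (ii) F_Y = V·B for some V ∈ ℝ^{z×m} and invertible m×m matrix B; (iii) F_s = W_s·A_s for some W_s ∈ ℝ^{z×p} and invertible p×p matrix A_s; (iv) F_r = W_s·C + W_r·D for some W_r ∈ ℝ^{z×q}, C ∈ ℝ^{p×q}, and invertible q×q matrix D; (v) W_sᵀ·W_r = 0; (vi) X_CᵀX_C, Y_CᵀY_C, W_sᵀW_s, W_rᵀW_r, and VᵀV are invertible. Then tr((X_CᵀX_C)⁻¹ X_CᵀY_C (Y_CᵀY_C)⁻¹ Y_CᵀX_C) = tr((W_sᵀW_s)⁻¹ W_sᵀV (VᵀV)⁻¹ VᵀW_s) + tr((W_rᵀW_r)⁻¹ W_rᵀV (VᵀV)⁻¹ VᵀW_r).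 -/

import Mathlib

open Matrix

set_option maxHeartbeats 1600000 in
/-- Angle Superposition Theorem (trace form). -/
theorem angle_superposition {N z p q m : ℕ}
    (Xs : Matrix (Fin N) (Fin p) ℝ) (Xr : Matrix (Fin N) (Fin q) ℝ)
    (Y : Matrix (Fin N) (Fin m) ℝ)
    (U : Matrix (Fin N) (Fin z) ℝ) (hU : Uᵀ * U = 1)
    (Fs : Matrix (Fin z) (Fin p) ℝ) (Fr : Matrix (Fin z) (Fin q) ℝ)
    (FY : Matrix (Fin z) (Fin m) ℝ)
    (hXs : Xs = U * Fs) (hXr : Xr = U * Fr) (hY : Y = U * FY)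
    (V : Matrix (Fin z) (Fin m) ℝ) (B : Matrix (Fin m) (Fin m) ℝ) (hB : IsUnit B)
    (hFY : FY = V * B)
    (Ws : Matrix (Fin z) (Fin p) ℝ) (As : Matrix (Fin p) (Fin p) ℝ) (hAs : IsUnit As)
    (hFs : Fs = Ws * As)
    (Wr : Matrix (Fin z) (Fin q) ℝ) (C : Matrix (Fin p) (Fin q) ℝ)
    (D : Matrix (Fin q) (Fin q) ℝ) (hD : IsUnit D)
    (hFr : Fr = Ws * C + Wr * D)
    (horth : Wsᵀ * Wr = 0)
    (hXX : IsUnit ((fromCols Xs Xr)ᵀ * fromCols Xs Xr))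
    (hYY : IsUnit (Yᵀ * Y))
    (hWs : IsUnit (Wsᵀ * Ws)) (hWr : IsUnit (Wrᵀ * Wr)) (hV : IsUnit (Vᵀ * V)) :
    trace (((fromCols Xs Xr)ᵀ * fromCols Xs Xr)⁻¹ * (fromCols Xs Xr)ᵀ * Y
        * (Yᵀ * Y)⁻¹ * Yᵀ * fromCols Xs Xr)
      = trace ((Wsᵀ * Ws)⁻¹ * Wsᵀ * V * (Vᵀ * V)⁻¹ * Vᵀ * Ws)
        + trace ((Wrᵀ * Wr)⁻¹ * Wrᵀ * V * (Vᵀ * V)⁻¹ * Vᵀ * Wr) := by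
  classical
  set Xc := fromCols Xs Xr with hXc
  set F := fromCols Fs Fr with hF
  set G := fromCols Ws Wr with hG
  set T : Matrix (Fin p ⊕ Fin q) (Fin p ⊕ Fin q) ℝ := fromBlocks As C 0 D with hT
  have horth' : Wrᵀ * Ws = 0 := by
    have := congrArg Matrix.transpose horth
    simpa [Matrix.transpose_mul] using this
  -- Xc = U * F and F = G * T
  have hXF : Xc = U * F := by
    rw [hXc, hF, mul_fromCols, hXs, hXr]
  have hFGT : F = G * T := by
    rw [hF, hG, hT, fromCols_mul_fromBlocks, hFs, hFr]
    simp
  -- Gram matrices through U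
  have gram : ∀ {a b : Type} [Fintype a] [Fintype b]
      (P : Matrix (Fin z) a ℝ) (Q : Matrix (Fin z) b ℝ),
      (U * P)ᵀ * (U * Q) = Pᵀ * Q := by
    intro a b _ _ P Q
    rw [Matrix.transpose_mul]
    calc Pᵀ * Uᵀ * (U * Q) = Pᵀ * (Uᵀ * U) * Q := by
          rw [Matrix.mul_assoc, Matrix.mul_assoc, Matrix.mul_assoc]
      _ = Pᵀ * Q := by rw [hU, Matrix.mul_one]
  have hXcX : Xcᵀ * Xc = Fᵀ * F := by rw [hXF, gram]
  have hXcY : Xcᵀ * Y = Fᵀ * FY := by rw [hXF, hY, gram]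
  have hYX : Yᵀ * Xc = FYᵀ * F := by rw [hXF, hY, gram]
  have hYYe : Yᵀ * Y = FYᵀ * FY := by rw [hY, gram]
  -- GᵀG is block diagonal
  have hGG : Gᵀ * G = fromBlocks (Wsᵀ * Ws) 0 0 (Wrᵀ * Wr) := by
    rw [hG, transpose_fromCols, fromRows_mul_fromCols, horth, horth']
  have hGGunit : IsUnit (Gᵀ * G) := by
    rw [hGG, Matrix.isUnit_iff_isUnit_det, det_fromBlocks_zero₁₂]
    exact ((Matrix.isUnit_iff_isUnit_det _).mp hWs).mul
      ((Matrix.isUnit_iff_isUnit_det _).mp hWr)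
  have hGGinv : (Gᵀ * G)⁻¹ = fromBlocks (Wsᵀ * Ws)⁻¹ 0 0 (Wrᵀ * Wr)⁻¹ := by
    apply Matrix.inv_eq_right_inv
    rw [hGG, fromBlocks_multiply]
    simp [Matrix.mul_nonsing_inv _ ((Matrix.isUnit_iff_isUnit_det _).mp hWs),
      Matrix.mul_nonsing_inv _ ((Matrix.isUnit_iff_isUnit_det _).mp hWr),
      Matrix.fromBlocks_one]
  -- T is invertible
  have hTdet : IsUnit T.det := by
    rw [hT, det_fromBlocks_zero₂₁]
    exact ((Matrix.isUnit_iff_isUnit_det _).mp hAs).mul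
      ((Matrix.isUnit_iff_isUnit_det _).mp hD)
  have hTT : T * T⁻¹ = 1 := Matrix.mul_nonsing_inv _ hTdet
  have hTT' : T⁻¹ * T = 1 := Matrix.nonsing_inv_mul _ hTdet
  have hTtT : Tᵀ⁻¹ * Tᵀ = 1 := by
    rw [← Matrix.transpose_nonsing_inv, ← Matrix.transpose_mul, hTT, Matrix.transpose_one]
  have hTtT' : Tᵀ * Tᵀ⁻¹ = 1 := by
    rw [← Matrix.transpose_nonsing_inv, ← Matrix.transpose_mul, hTT', Matrix.transpose_one]
  -- projection identity
  have hFF : Fᵀ * F = Tᵀ * (Gᵀ * G) * T := by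
    rw [hFGT, Matrix.transpose_mul]
    simp only [Matrix.mul_assoc]
  have hFFinv : (Fᵀ * F)⁻¹ = T⁻¹ * (Gᵀ * G)⁻¹ * Tᵀ⁻¹ := by
    rw [hFF, Matrix.mul_inv_rev, Matrix.mul_inv_rev, Matrix.mul_assoc]
  have hproj : F * (Fᵀ * F)⁻¹ * Fᵀ = G * (Gᵀ * G)⁻¹ * Gᵀ := by
    rw [hFFinv, hFGT, Matrix.transpose_mul]
    calc G * T * (T⁻¹ * (Gᵀ * G)⁻¹ * Tᵀ⁻¹) * (Tᵀ * Gᵀ)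
        = G * (T * T⁻¹) * (Gᵀ * G)⁻¹ * (Tᵀ⁻¹ * Tᵀ) * Gᵀ := by
          simp only [Matrix.mul_assoc]
      _ = G * (Gᵀ * G)⁻¹ * Gᵀ := by rw [hTT, hTtT, Matrix.mul_one, Matrix.mul_one]
  have hprojG : G * (Gᵀ * G)⁻¹ * Gᵀ
      = Ws * (Wsᵀ * Ws)⁻¹ * Wsᵀ + Wr * (Wrᵀ * Wr)⁻¹ * Wrᵀ := by
    rw [hGGinv, hG, transpose_fromCols, fromCols_mul_fromBlocks,
      fromCols_mul_fromRows]
    simp [Matrix.mul_assoc]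
  -- Y side
  have hBB : B * B⁻¹ = 1 := Matrix.mul_nonsing_inv _ ((Matrix.isUnit_iff_isUnit_det _).mp hB)
  have hBB' : B⁻¹ * B = 1 := Matrix.nonsing_inv_mul _ ((Matrix.isUnit_iff_isUnit_det _).mp hB)
  have hBtB : Bᵀ⁻¹ * Bᵀ = 1 := by
    rw [← Matrix.transpose_nonsing_inv, ← Matrix.transpose_mul, hBB, Matrix.transpose_one]
  have hYYv : (Yᵀ * Y)⁻¹ = B⁻¹ * (Vᵀ * V)⁻¹ * Bᵀ⁻¹ := by
    rw [hYYe, hFY, Matrix.transpose_mul]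
    have : Bᵀ * Vᵀ * (V * B) = Bᵀ * (Vᵀ * V) * B := by simp only [Matrix.mul_assoc]
    rw [this, Matrix.mul_inv_rev, Matrix.mul_inv_rev, Matrix.mul_assoc]
  -- middle chunk: Xcᵀ Y (YᵀY)⁻¹ Yᵀ Xc = Fᵀ * P * F with P = V (VᵀV)⁻¹ Vᵀ
  set P : Matrix (Fin z) (Fin z) ℝ := V * (Vᵀ * V)⁻¹ * Vᵀ with hP
  have hmid : Xcᵀ * Y * (Yᵀ * Y)⁻¹ * (Yᵀ * Xc) = Fᵀ * P * F := by
    rw [hXcY, hYX, hYYv, hFY, hP, Matrix.transpose_mul]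
    calc Fᵀ * (V * B) * (B⁻¹ * (Vᵀ * V)⁻¹ * Bᵀ⁻¹) * (Bᵀ * Vᵀ * F)
        = Fᵀ * (V * ((B * B⁻¹) * (Vᵀ * V)⁻¹ * (Bᵀ⁻¹ * Bᵀ)) * Vᵀ) * F := by
          simp only [Matrix.mul_assoc]
      _ = Fᵀ * (V * (Vᵀ * V)⁻¹ * Vᵀ) * F := by
          rw [hBB, hBtB, Matrix.one_mul, Matrix.mul_one]
  -- trace computation
  have key : trace ((Xcᵀ * Xc)⁻¹ * (Xcᵀ * Y * (Yᵀ * Y)⁻¹ * (Yᵀ * Xc)))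
      = trace (P * (Ws * (Wsᵀ * Ws)⁻¹ * Wsᵀ)) + trace (P * (Wr * (Wrᵀ * Wr)⁻¹ * Wrᵀ)) := by
    rw [hmid, hXcX]
    have e1 : (Fᵀ * F)⁻¹ * (Fᵀ * P * F) = ((Fᵀ * F)⁻¹ * Fᵀ) * (P * F) := by
      simp only [Matrix.mul_assoc]
    rw [e1, Matrix.trace_mul_comm]
    have e2 : P * F * ((Fᵀ * F)⁻¹ * Fᵀ) = P * (F * (Fᵀ * F)⁻¹ * Fᵀ) := by
      simp only [Matrix.mul_assoc]
    rw [e2, hproj, hprojG, Matrix.mul_add, trace_add]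
  have cyc : ∀ {a : Type} [Fintype a] [DecidableEq a] (W : Matrix (Fin z) a ℝ),
      trace (P * (W * (Wᵀ * W)⁻¹ * Wᵀ)) = trace ((Wᵀ * W)⁻¹ * Wᵀ * V * (Vᵀ * V)⁻¹ * Vᵀ * W) := by
    intro a _ _ W
    have h1 : P * (W * (Wᵀ * W)⁻¹ * Wᵀ) = (P * W) * ((Wᵀ * W)⁻¹ * Wᵀ) := by
      simp only [Matrix.mul_assoc]
    rw [h1, Matrix.trace_mul_comm, hP]
    simp only [Matrix.mul_assoc]
  have lhs_eq : (Xcᵀ * Xc)⁻¹ * Xcᵀ * Y * (Yᵀ * Y)⁻¹ * Yᵀ * Xc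
      = (Xcᵀ * Xc)⁻¹ * (Xcᵀ * Y * (Yᵀ * Y)⁻¹ * (Yᵀ * Xc)) := by
    simp only [Matrix.mul_assoc]
  rw [lhs_eq, key]
  exact congrArg₂ (· + ·) (cyc Ws) (cyc Wr)
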